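/- With the vertex-based uniform growth model, the expected Wiener index of the random tree T_I(1) obtained from the seed tree T by one application of Operation-I is E[W(T_I(1))] = W_T·(μS + 1)² + μ(μS + 1)·(Σ_{i=1}^{μ} p_i·C(m_i+1,2))·h² + { μ·Σ_{i=1}^{μ} p_i·Σ_{l=2}^{m_i} C(l,2) + [2S·C(μ,2) − μ²S]·Σ_{i=1}^{μ} p_i·C(m_i+1,2) }·h, where C(a,b) denotes the binomial coefficient (equal to 0 when a < b) and empty sums equal 0. -/

import Mathlib

set_option autoImplicit false

open Finset

/-- The two endpoints of an unordered pair, as a `Finset`. -/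
def sym2Finset (e : Sym2 ℕ) : Finset ℕ :=
  Sym2.lift ⟨fun a b => {a, b}, fun a b => by ext x; simp [or_comm]⟩ e

/-- The vertex set of the graph on `ℕ` whose edge set is the finite set `E`. -/
def verts (E : Finset (Sym2 ℕ)) : Finset ℕ := E.biUnion sym2Finset

/-- The Wiener index of the graph with edge set `E`: the sum of shortest-path
distances over all unordered pairs of vertices (here computed as half the sum
over ordered pairs). -/
noncomputable def wienerE (E : Finset (Sym2 ℕ)) : ℝ :=
  (∑ u ∈ verts E, ∑ v ∈ verts E,
    ((SimpleGraph.fromEdgeSet (↑E : Set (Sym2 ℕ))).dist u v : ℝ)) / 2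

/-- `E` is the edge set of a (nonempty, loopless, acyclic, connected) tree. -/
def IsTreeEdges (E : Finset (Sym2 ℕ)) : Prop :=
  E.Nonempty ∧ (∀ e ∈ E, ¬ e.IsDiag) ∧
  (SimpleGraph.fromEdgeSet (↑E : Set (Sym2 ℕ))).IsAcyclic ∧
  ∀ u ∈ verts E, ∀ v ∈ verts E,
    (SimpleGraph.fromEdgeSet (↑E : Set (Sym2 ℕ))).Reachable u v

/-- A base label strictly larger than every vertex label used in `E`. -/
def freshE (E : Finset (Sym2 ℕ)) : ℕ := (verts E).sup id + 1

/-- The `L` edges of a pendant path `root — f 0 — f 1 — ⋯ — f (L-1)`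
consisting of `L` new vertices attached to `root`. -/
def pathEdges (root : ℕ) (f : ℕ → ℕ) (L : ℕ) : Finset (Sym2 ℕ) :=
  (Finset.range L).image (fun j => if j = 0 then s(root, f 0) else s(f (j-1), f j))

/-- Fresh labels for the vertices of the paths attached by Operation-I:
vertex `j` of the `k`-th path attached at vertex `v`. -/
def lblI (B v k j : ℕ) : ℕ := B + Nat.pair v (Nat.pair k j)

/-- Operation-I (vertex-based uniform growth): given the choice function `c`
(the `k`-th path attached at vertex `v` gets `m (c v k)` vertices), attach to every
vertex `v` of `E` the `μ` chosen pendant paths, using fresh labels. -/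
def applyI (μ : ℕ) (m : Fin μ → ℕ) (E : Finset (Sym2 ℕ))
    (c : {x // x ∈ verts E} → Fin μ → Fin μ) : Finset (Sym2 ℕ) :=
  E ∪ (Finset.univ : Finset ({x // x ∈ verts E} × Fin μ)).biUnion
      (fun vk => pathEdges (vk.1 : ℕ)
        (fun j => lblI (freshE E) (vk.1 : ℕ) (vk.2 : ℕ) j) (m (c vk.1 vk.2)))

/-- One random step of Operation-I as an expectation transformer: the expected value
of `f` of the random tree obtained from `E` by one application of Operation-I, where
each path length index is chosen independently with probabilities `p`. -/
noncomputable def stepI (μ : ℕ) (p : Fin μ → ℝ) (m : Fin μ → ℕ)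
    (f : Finset (Sym2 ℕ) → ℝ) (E : Finset (Sym2 ℕ)) : ℝ :=
  ∑ c : {x // x ∈ verts E} → Fin μ → Fin μ,
    (∏ v : {x // x ∈ verts E}, ∏ k : Fin μ, p (c v k)) * f (applyI μ m E c)

/-- `expI μ p m f t E` is the expected value of `f (T_I(t))` for the random tree
`T_I(t)` obtained from the seed `E` by `t` independent applications of Operation-I. -/
noncomputable def expI (μ : ℕ) (p : Fin μ → ℝ) (m : Fin μ → ℕ)
    (f : Finset (Sym2 ℕ) → ℝ) : ℕ → Finset (Sym2 ℕ) → ℝ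
  | 0, E => f E
  | (t+1), E => stepI μ p m (fun Ep => expI μ p m f t Ep) E

namespace OpI

abbrev Gr (E : Finset (Sym2 ℕ)) : SimpleGraph ℕ := SimpleGraph.fromEdgeSet (↑E : Set (Sym2 ℕ))

lemma mem_sym2Finset {x : ℕ} {e : Sym2 ℕ} : x ∈ sym2Finset e ↔ x ∈ e := by
  induction e using Sym2.ind with
  | _ a b => simp [sym2Finset, Sym2.mem_iff]

lemma mem_verts {x : ℕ} {E : Finset (Sym2 ℕ)} : x ∈ verts E ↔ ∃ e ∈ E, x ∈ e := by
  simp [verts, mem_sym2Finset]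

lemma mem_pathEdges {root L : ℕ} {f : ℕ → ℕ} {e : Sym2 ℕ} :
    e ∈ pathEdges root f L ↔ ∃ j < L, e = (if j = 0 then s(root, f 0) else s(f (j-1), f j)) := by
  simp [pathEdges, eq_comm]

lemma verts_union {A B : Finset (Sym2 ℕ)} : verts (A ∪ B) = verts A ∪ verts B := by
  ext x; simp [mem_verts, or_and_right, exists_or]

lemma verts_biUnion {ι : Type*} [DecidableEq ι] {s : Finset ι} {f : ι → Finset (Sym2 ℕ)} :
    verts (s.biUnion f) = s.biUnion (fun i => verts (f i)) := by
  ext x; simp [mem_verts]; tauto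

lemma verts_pathEdges {root L : ℕ} {f : ℕ → ℕ} (hL : 0 < L) :
    verts (pathEdges root f L) = insert root ((Finset.range L).image f) := by
  ext x
  simp only [mem_verts, mem_pathEdges, Finset.mem_insert, Finset.mem_image, Finset.mem_range]
  constructor
  · rintro ⟨e, ⟨j, hj, rfl⟩, hx⟩
    by_cases h0 : j = 0
    · rw [if_pos h0, Sym2.mem_iff] at hx
      rcases hx with rfl | rfl
      · exact Or.inl rfl
      · exact Or.inr ⟨0, hL, rfl⟩
    · rw [if_neg h0, Sym2.mem_iff] at hx
      rcases hx with rfl | rfl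
      · exact Or.inr ⟨j - 1, by omega, rfl⟩
      · exact Or.inr ⟨j, hj, rfl⟩
  · rintro (rfl | ⟨j, hj, rfl⟩)
    · exact ⟨_, ⟨0, hL, rfl⟩, by simp⟩
    · by_cases h0 : j = 0
      · subst h0; exact ⟨_, ⟨0, hL, rfl⟩, by simp⟩
      · exact ⟨_, ⟨j, hj, rfl⟩, by simp [h0]⟩

lemma lblI_inj {B : ℕ} {v k j v' k' j' : ℕ} :
    lblI B v k j = lblI B v' k' j' ↔ v = v' ∧ k = k' ∧ j = j' := by
  simp [lblI, Nat.pair_eq_pair]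

lemma lt_freshE {E : Finset (Sym2 ℕ)} {x : ℕ} (hx : x ∈ verts E) : x < freshE E :=
  Nat.lt_succ_of_le (Finset.le_sup (f := id) hx)

lemma freshE_le_lblI {E : Finset (Sym2 ℕ)} {v k j : ℕ} : freshE E ≤ lblI (freshE E) v k j :=
  Nat.le_add_right _ _

lemma lblI_not_mem_verts {E : Finset (Sym2 ℕ)} {v k j : ℕ} : lblI (freshE E) v k j ∉ verts E :=
  fun h => absurd (lt_freshE h) (not_lt.mpr freshE_le_lblI)

section Graph
variable (μ : ℕ) (m : Fin μ → ℕ) (E : Finset (Sym2 ℕ))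
  (c : {x // x ∈ verts E} → Fin μ → Fin μ)

/-- index type for attached paths -/
abbrev Idx := {x // x ∈ verts E} × Fin μ

/-- length of the path at `vk` -/
def Lf (vk : Idx μ E) : ℕ := m (c vk.1 vk.2)

/-- root of the path at `vk` -/
def rt (vk : Idx μ E) : ℕ := (vk.1 : ℕ)

/-- the `j`-th new vertex of the path at `vk` -/
def lab (vk : Idx μ E) (j : ℕ) : ℕ := lblI (freshE E) (rt μ E vk) (vk.2 : ℕ) j

/-- path vertices including root: `pv vk 0 = root`, `pv vk (j+1) = lab vk j` -/
def pv (vk : Idx μ E) : ℕ → ℕ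
  | 0 => rt μ E vk
  | (j+1) => lab μ E vk j

lemma rt_mem (vk : Idx μ E) : rt μ E vk ∈ verts E := vk.1.2

lemma rt_lt_fresh (vk : Idx μ E) : rt μ E vk < freshE E := lt_freshE (rt_mem μ E vk)

lemma lab_inj {vk wk : Idx μ E} {j j' : ℕ} :
    lab μ E vk j = lab μ E wk j' ↔ vk = wk ∧ j = j' := by
  rw [lab, lab, lblI_inj]
  constructor
  · rintro ⟨h1, h2, h3⟩
    refine ⟨Prod.ext (Subtype.ext h1) (Fin.ext h2), h3⟩
  · rintro ⟨rfl, rfl⟩; exact ⟨rfl, rfl, rfl⟩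

lemma lab_not_mem (vk : Idx μ E) (j : ℕ) : lab μ E vk j ∉ verts E := lblI_not_mem_verts

lemma pv_ne (vk : Idx μ E) (i : ℕ) : pv μ E vk i ≠ pv μ E vk (i+1) := by
  cases i with
  | zero =>
    intro h
    simp only [pv] at h
    exact lab_not_mem μ E vk 0 (h ▸ rt_mem μ E vk)
  | succ i =>
    intro h
    have := (lab_inj μ E).mp h
    omega

/-- The modified edge description of `pathEdges` via `pv`. -/
lemma pathEdges_index (vk : Idx μ E) {i L : ℕ} (hi : i < L) :
    (if i = 0 then s(rt μ E vk, lab μ E vk 0)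
      else s(lab μ E vk (i-1), lab μ E vk i)) = s(pv μ E vk i, pv μ E vk (i+1)) := by
  cases i with
  | zero => simp [pv]
  | succ i => simp [pv]

lemma mem_applyI {e : Sym2 ℕ} :
    e ∈ applyI μ m E c ↔ e ∈ E ∨ ∃ vk : Idx μ E, ∃ i < Lf μ m E c vk,
      e = s(pv μ E vk i, pv μ E vk (i+1)) := by
  simp only [applyI, Finset.mem_union, Finset.mem_biUnion, Finset.mem_univ, true_and]
  apply or_congr Iff.rfl
  constructor
  · rintro ⟨vk, hm⟩
    rw [mem_pathEdges] at hm
    obtain ⟨j, hj, he⟩ := hm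
    exact ⟨vk, j, hj, by rw [he, ← pathEdges_index μ E vk hj]; rfl⟩
  · rintro ⟨vk, i, hi, he⟩
    refine ⟨vk, ?_⟩
    rw [mem_pathEdges]
    exact ⟨i, hi, by rw [he, ← pathEdges_index μ E vk hi]; rfl⟩

lemma adj_applyI {x y : ℕ} :
    (Gr (applyI μ m E c)).Adj x y ↔
      (s(x,y) ∈ E ∨ ∃ vk : Idx μ E, ∃ i < Lf μ m E c vk,
        s(x,y) = s(pv μ E vk i, pv μ E vk (i+1))) ∧ x ≠ y := by
  rw [SimpleGraph.fromEdgeSet_adj, Finset.mem_coe, mem_applyI]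

lemma adj_pv (vk : Idx μ E) {i : ℕ} (hi : i < Lf μ m E c vk) :
    (Gr (applyI μ m E c)).Adj (pv μ E vk i) (pv μ E vk (i+1)) :=
  (adj_applyI μ m E c).mpr ⟨Or.inr ⟨vk, i, hi, rfl⟩, pv_ne μ E vk i⟩

lemma exists_walkdown (vk : Idx μ E) :
    ∀ j, j ≤ Lf μ m E c vk → ∀ j'', j'' ≤ j →
      ∃ w : (Gr (applyI μ m E c)).Walk (pv μ E vk j) (pv μ E vk j''), w.length = j - j'' := by
  intro j
  induction j with
  | zero => intro _ j'' hj''; interval_cases j''; exact ⟨SimpleGraph.Walk.nil, rfl⟩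
  | succ j ih =>
    intro hj j'' hj''
    rcases Nat.eq_or_lt_of_le hj'' with rfl | hlt
    · exact ⟨SimpleGraph.Walk.nil, by simp⟩
    · obtain ⟨w, hw⟩ := ih (by omega) j'' (by omega)
      exact ⟨SimpleGraph.Walk.cons (adj_pv μ m E c vk (by omega)).symm w, by simp [hw]; omega⟩

lemma grE_le : Gr E ≤ Gr (applyI μ m E c) :=
  SimpleGraph.fromEdgeSet_mono (by exact_mod_cast Finset.subset_union_left)

/-- retraction to the original vertex set -/
def retr (x : ℕ) : ℕ := if x < freshE E then x else (x - freshE E).unpair.1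

/-- height potential along the path at `vk` -/
def psi (vk : Idx μ E) (x : ℕ) : ℤ :=
  if freshE E ≤ x ∧ (x - freshE E).unpair.1 = rt μ E vk ∧
      (x - freshE E).unpair.2.unpair.1 = (vk.2 : ℕ)
  then ((x - freshE E).unpair.2.unpair.2 : ℤ) + 1 else 0

lemma retr_low {x : ℕ} (hx : x ∈ verts E) : retr E x = x := by
  rw [retr, if_pos (lt_freshE hx)]

lemma retr_lab (vk : Idx μ E) (j : ℕ) : retr E (lab μ E vk j) = rt μ E vk := by
  rw [retr, if_neg (by exact not_lt.mpr freshE_le_lblI)]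
  simp [lab, lblI]

lemma retr_pv (vk : Idx μ E) (j : ℕ) : retr E (pv μ E vk j) = rt μ E vk := by
  cases j with
  | zero => exact retr_low E (rt_mem μ E vk)
  | succ j => exact retr_lab μ E vk j

lemma psi_low (vk : Idx μ E) {x : ℕ} (hx : x ∈ verts E) : psi μ E vk x = 0 := by
  rw [psi, if_neg]; intro h; exact absurd (lt_freshE hx) (not_lt.mpr h.1)

lemma psi_lab_self (vk : Idx μ E) (j : ℕ) : psi μ E vk (lab μ E vk j) = (j : ℤ) + 1 := by
  rw [psi, if_pos] <;> simp [lab, lblI]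

lemma idx_ne_coords {vk wk : Idx μ E} (hne : vk ≠ wk) :
    rt μ E vk ≠ rt μ E wk ∨ (vk.2 : ℕ) ≠ (wk.2 : ℕ) := by
  by_contra hcon
  push_neg at hcon
  exact hne (Prod.ext (Subtype.ext hcon.1) (Fin.ext hcon.2))

lemma psi_lab_other {vk wk : Idx μ E} (hne : vk ≠ wk) (j : ℕ) :
    psi μ E vk (lab μ E wk j) = 0 := by
  rw [psi, if_neg]
  simp only [lab, lblI, Nat.add_sub_cancel_left, Nat.unpair_pair]
  rintro ⟨-, h1, h2⟩
  rcases idx_ne_coords μ E hne with hc | hc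
  · exact hc h1.symm
  · exact hc h2.symm

lemma psi_pv_self (vk : Idx μ E) (j : ℕ) : psi μ E vk (pv μ E vk j) = (j : ℤ) := by
  cases j with
  | zero => exact psi_low μ E vk (rt_mem μ E vk)
  | succ j => rw [pv, psi_lab_self]; push_cast; ring

lemma psi_pv_other {vk wk : Idx μ E} (hne : vk ≠ wk) (j : ℕ) :
    psi μ E vk (pv μ E wk j) = 0 := by
  cases j with
  | zero => exact psi_low μ E vk (rt_mem μ E wk)
  | succ j => exact psi_lab_other μ E hne j

lemma adj_mem_verts {x y : ℕ} (h : (Gr E).Adj x y) : x ∈ verts E ∧ y ∈ verts E := by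
  rw [SimpleGraph.fromEdgeSet_adj] at h
  exact ⟨mem_verts.mpr ⟨_, h.1, Sym2.mem_mk_left x y⟩,
    mem_verts.mpr ⟨_, h.1, Sym2.mem_mk_right x y⟩⟩

lemma dist_adj_le (hT : IsTreeEdges E) {x y w0 : ℕ} (hadj : (Gr E).Adj x y)
    (hw0 : w0 ∈ verts E) : (Gr E).dist x w0 ≤ (Gr E).dist y w0 + 1 := by
  obtain ⟨hx, hy⟩ := adj_mem_verts E hadj
  obtain ⟨p, hp⟩ := (hT.2.2.2 y hy w0 hw0).exists_walk_length_eq_dist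
  have := SimpleGraph.dist_le (SimpleGraph.Walk.cons hadj p)
  rw [SimpleGraph.Walk.length_cons, hp] at this
  exact this

lemma dist_retr_lip (hT : IsTreeEdges E) {w0 : ℕ} (hw0 : w0 ∈ verts E)
    {x y : ℕ} (hadj : (Gr E).Adj x y) :
    |((Gr E).dist x w0 : ℤ) - ((Gr E).dist y w0 : ℤ)| ≤ 1 := by
  have h1 : (SimpleGraph.fromEdgeSet (↑E : Set (Sym2 ℕ))).dist x w0
      ≤ (SimpleGraph.fromEdgeSet (↑E : Set (Sym2 ℕ))).dist y w0 + 1 :=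
    dist_adj_le E hT hadj hw0
  have h2 : (SimpleGraph.fromEdgeSet (↑E : Set (Sym2 ℕ))).dist y w0
      ≤ (SimpleGraph.fromEdgeSet (↑E : Set (Sym2 ℕ))).dist x w0 + 1 :=
    dist_adj_le E hT hadj.symm hw0
  show |((SimpleGraph.fromEdgeSet (↑E : Set (Sym2 ℕ))).dist x w0 : ℤ)
      - ((SimpleGraph.fromEdgeSet (↑E : Set (Sym2 ℕ))).dist y w0 : ℤ)| ≤ 1
  rw [abs_le]; omega

/-- generic: a |·|-Lipschitz potential bounds walk lengths from below -/
lemma walk_abs_le (E' : Finset (Sym2 ℕ)) (φ : ℕ → ℤ)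
    (hlip : ∀ x y, (Gr E').Adj x y → |φ x - φ y| ≤ 1) :
    ∀ {a b : ℕ} (p : (Gr E').Walk a b), |φ a - φ b| ≤ p.length := by
  intro a b p
  induction p with
  | nil => simp
  | @cons a x b hadj q ih =>
    have h1 := hlip a x hadj
    have := abs_sub_le (φ a) (φ x) (φ b)
    rw [SimpleGraph.Walk.length_cons]
    push_cast
    omega

lemma dist_lower (E' : Finset (Sym2 ℕ)) (φ : ℕ → ℤ)
    (hlip : ∀ x y, (Gr E').Adj x y → |φ x - φ y| ≤ 1)
    {a b : ℕ} (hr : (Gr E').Reachable a b) :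
    |φ a - φ b| ≤ ((Gr E').dist a b : ℤ) := by
  obtain ⟨p, hp⟩ := hr.exists_walk_length_eq_dist
  simpa [hp] using walk_abs_le E' φ hlip p

/-- the master potential is Lipschitz on the grown graph -/
lemma lip_master (hT : IsTreeEdges E) (vk wk' : Idx μ E) (hne : vk ≠ wk') :
    ∀ x y, (Gr (applyI μ m E c)).Adj x y →
      |(psi μ E vk x - psi μ E wk' x + ((Gr E).dist (retr E x) (rt μ E wk') : ℤ)) -
       (psi μ E vk y - psi μ E wk' y + ((Gr E).dist (retr E y) (rt μ E wk') : ℤ))| ≤ 1 := by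
  intro x y hadj
  rw [adj_applyI] at hadj
  obtain ⟨hmem | ⟨uk, i, hi, hxy⟩, hxyne⟩ := hadj
  · have hadjE : (Gr E).Adj x y := (SimpleGraph.fromEdgeSet_adj _).mpr ⟨hmem, hxyne⟩
    obtain ⟨hx, hy⟩ := adj_mem_verts E hadjE
    rw [psi_low μ E vk hx, psi_low μ E vk hy, psi_low μ E wk' hx, psi_low μ E wk' hy,
      retr_low E hx, retr_low E hy]
    simpa using dist_retr_lip E hT (rt_mem μ E wk') hadjE
  · rw [Sym2.eq_iff] at hxy
    have key : ∀ a b : ℕ, a = pv μ E uk i → b = pv μ E uk (i+1) →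
        |(psi μ E vk a - psi μ E wk' a + ((Gr E).dist (retr E a) (rt μ E wk') : ℤ)) -
         (psi μ E vk b - psi μ E wk' b + ((Gr E).dist (retr E b) (rt μ E wk') : ℤ))| ≤ 1 := by
      rintro a b rfl rfl
      rw [retr_pv, retr_pv]
      by_cases h1 : uk = vk
      · subst h1
        rw [psi_pv_self, psi_pv_self, psi_pv_other μ E (Ne.symm hne),
          psi_pv_other μ E (Ne.symm hne)]
        rw [abs_le]; push_cast; omega
      · rw [psi_pv_other μ E (fun h => h1 h.symm), psi_pv_other μ E (fun h => h1 h.symm)]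
        by_cases h2 : uk = wk'
        · subst h2
          rw [psi_pv_self, psi_pv_self]
          rw [abs_le]; push_cast; omega
        · rw [psi_pv_other μ E (fun h => h2 h.symm), psi_pv_other μ E (fun h => h2 h.symm)]
          rw [abs_le]; omega
    rcases hxy with ⟨rfl, rfl⟩ | ⟨hx, hy⟩
    · exact key _ _ rfl rfl
    · have := key y x hy hx
      rwa [abs_sub_comm] at this

/-- the single-path potential is Lipschitz on the grown graph -/
lemma lip_same (vk : Idx μ E) :
    ∀ x y, (Gr (applyI μ m E c)).Adj x y → |psi μ E vk x - psi μ E vk y| ≤ 1 := by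
  intro x y hadj
  rw [adj_applyI] at hadj
  obtain ⟨hmem | ⟨uk, i, hi, hxy⟩, hxyne⟩ := hadj
  · have hadjE : (Gr E).Adj x y := (SimpleGraph.fromEdgeSet_adj _).mpr ⟨hmem, hxyne⟩
    obtain ⟨hx, hy⟩ := adj_mem_verts E hadjE
    rw [psi_low μ E vk hx, psi_low μ E vk hy]; simp
  · rw [Sym2.eq_iff] at hxy
    have key : ∀ a b : ℕ, a = pv μ E uk i → b = pv μ E uk (i+1) →
        |psi μ E vk a - psi μ E vk b| ≤ 1 := by
      rintro a b rfl rfl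
      by_cases h1 : uk = vk
      · subst h1; rw [psi_pv_self, psi_pv_self]; rw [abs_le]; push_cast; omega
      · rw [psi_pv_other μ E (fun h => h1 h.symm), psi_pv_other μ E (fun h => h1 h.symm)]
        simp
    rcases hxy with ⟨rfl, rfl⟩ | ⟨hx, hy⟩
    · exact key _ _ rfl rfl
    · have := key y x hy hx
      rwa [abs_sub_comm] at this

lemma dist_pv_same_aux (vk : Idx μ E) {j j' : ℕ} (hj : j ≤ Lf μ m E c vk) (hle : j' ≤ j) :
    (Gr (applyI μ m E c)).dist (pv μ E vk j) (pv μ E vk j') = j - j' := by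
  obtain ⟨w, hw⟩ := exists_walkdown μ m E c vk j hj j' hle
  have hub := SimpleGraph.dist_le w
  rw [hw] at hub
  have hlb := dist_lower (applyI μ m E c) (psi μ E vk) (lip_same μ m E c vk) ⟨w⟩
  rw [psi_pv_self, psi_pv_self, abs_le] at hlb
  omega

theorem dist_pv_same (vk : Idx μ E) {j j' : ℕ} (hj : j ≤ Lf μ m E c vk)
    (hj' : j' ≤ Lf μ m E c vk) :
    (Gr (applyI μ m E c)).dist (pv μ E vk j) (pv μ E vk j') = Nat.dist j j' := by
  rcases le_total j' j with hle | hle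
  · rw [dist_pv_same_aux μ m E c vk hj hle, Nat.dist_eq_sub_of_le_right hle]
  · rw [SimpleGraph.dist_comm, dist_pv_same_aux μ m E c vk hj' hle,
      Nat.dist_eq_sub_of_le hle]

theorem dist_pv_diff (hT : IsTreeEdges E) {vk wk' : Idx μ E} (hne : vk ≠ wk') {j j' : ℕ}
    (hj : j ≤ Lf μ m E c vk) (hj' : j' ≤ Lf μ m E c wk') :
    (Gr (applyI μ m E c)).dist (pv μ E vk j) (pv μ E wk' j')
      = (Gr E).dist (rt μ E vk) (rt μ E wk') + j + j' := by
  obtain ⟨w1, hw1⟩ := exists_walkdown μ m E c vk j hj 0 (Nat.zero_le _)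
  obtain ⟨w2, hw2⟩ := exists_walkdown μ m E c wk' j' hj' 0 (Nat.zero_le _)
  obtain ⟨wG, hwG⟩ := (hT.2.2.2 _ (rt_mem μ E vk) _ (rt_mem μ E wk')).exists_walk_length_eq_dist
  have hwG' : ((wG.mapLe (grE_le μ m E c)).copy rfl rfl :
      (Gr (applyI μ m E c)).Walk (pv μ E vk 0) (pv μ E wk' 0)).length
      = (Gr E).dist (rt μ E vk) (rt μ E wk') := by
    exact (SimpleGraph.Walk.length_copy ..).trans ((SimpleGraph.Walk.length_mapLe ..).trans hwG)
  set W := w1.append (((wG.mapLe (grE_le μ m E c)).copy rfl rfl :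
      (Gr (applyI μ m E c)).Walk (pv μ E vk 0) (pv μ E wk' 0)).append w2.reverse) with hW
  have hWlen : W.length = j + ((Gr E).dist (rt μ E vk) (rt μ E wk') + j') := by
    rw [hW, SimpleGraph.Walk.length_append, SimpleGraph.Walk.length_append,
      SimpleGraph.Walk.length_reverse, hw1, hw2, hwG']
    omega
  have hub := SimpleGraph.dist_le W
  rw [hWlen] at hub
  have hlb := dist_lower (applyI μ m E c)
    (fun x => psi μ E vk x - psi μ E wk' x + ((Gr E).dist (retr E x) (rt μ E wk') : ℤ))
    (lip_master μ m E c hT vk wk' hne) ⟨W⟩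
  simp only [psi_pv_self, psi_pv_other μ E hne, psi_pv_other μ E (Ne.symm hne),
    retr_pv, SimpleGraph.dist_self, abs_le] at hlb
  omega

/-- set of new (path) vertices -/
def Pset : Finset ℕ :=
  Finset.univ.biUnion (fun vk : Idx μ E => (Finset.range (Lf μ m E c vk)).image (lab μ E vk))

lemma mem_Pset {x : ℕ} : x ∈ Pset μ m E c ↔
    ∃ vk : Idx μ E, ∃ j < Lf μ m E c vk, x = lab μ E vk j := by
  simp [Pset, eq_comm]

lemma verts_applyI (hmpos : ∀ i, 0 < m i) :
    verts (applyI μ m E c) = verts E ∪ Pset μ m E c := by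
  rw [applyI, verts_union, verts_biUnion]
  ext x
  simp only [Finset.mem_union, Finset.mem_biUnion, Finset.mem_univ, true_and, Pset]
  constructor
  · rintro (hx | ⟨vk, hx⟩)
    · exact Or.inl hx
    · rw [verts_pathEdges (hmpos _)] at hx
      rcases Finset.mem_insert.mp hx with rfl | hx
      · exact Or.inl (rt_mem μ E vk)
      · exact Or.inr ⟨vk, hx⟩
  · rintro (hx | ⟨vk, hx⟩)
    · exact Or.inl hx
    · refine Or.inr ⟨vk, ?_⟩
      rw [verts_pathEdges (hmpos _)]
      exact Finset.mem_insert_of_mem hx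

lemma disj_V_P : Disjoint (verts E) (Pset μ m E c) := by
  rw [Finset.disjoint_right]
  intro x hx
  rw [mem_Pset] at hx
  obtain ⟨vk, j, _, rfl⟩ := hx
  exact lab_not_mem μ E vk j

lemma sum_Pset (g : ℕ → ℝ) :
    ∑ x ∈ Pset μ m E c, g x
      = ∑ vk : Idx μ E, ∑ j ∈ Finset.range (Lf μ m E c vk), g (lab μ E vk j) := by
  rw [Pset, Finset.sum_biUnion]
  · refine Finset.sum_congr rfl fun vk _ => ?_
    rw [Finset.sum_image]
    intro a _ b _ hab
    exact ((lab_inj μ E).mp hab).2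
  · intro a _ b _ hab
    simp only [Finset.disjoint_left, Finset.mem_image, Finset.mem_range]
    rintro x ⟨j, _, rfl⟩ ⟨j', _, he⟩
    exact hab (((lab_inj μ E).mp he.symm).1)

lemma dist_VV (hμ : 1 ≤ μ) (hT : IsTreeEdges E) {u w : ℕ}
    (hu : u ∈ verts E) (hw : w ∈ verts E) :
    (Gr (applyI μ m E c)).dist u w = (Gr E).dist u w := by
  by_cases huw : u = w
  · subst huw; rw [SimpleGraph.dist_self, SimpleGraph.dist_self]
  · have hne : ((⟨u, hu⟩ : {x // x ∈ verts E}), (⟨0, hμ⟩ : Fin μ))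
        ≠ ((⟨w, hw⟩ : {x // x ∈ verts E}), (⟨0, hμ⟩ : Fin μ)) := by
      simp only [ne_eq, Prod.mk.injEq, Subtype.mk.injEq]
      intro hc; exact absurd hc.1 huw
    have h2 : (Gr (applyI μ m E c)).dist u w = (Gr E).dist u w + 0 + 0 :=
      dist_pv_diff μ m E c hT hne (j := 0) (j' := 0) (Nat.zero_le _) (Nat.zero_le _)
    omega

lemma dist_PV (hμ : 1 ≤ μ) (hT : IsTreeEdges E) {vk : Idx μ E} {j u : ℕ}
    (hj : j < Lf μ m E c vk) (hu : u ∈ verts E) :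
    (Gr (applyI μ m E c)).dist (lab μ E vk j) u
      = (Gr E).dist (rt μ E vk) u + (j + 1) := by
  by_cases hvw : vk = ((⟨u, hu⟩ : {x // x ∈ verts E}), (⟨0, hμ⟩ : Fin μ))
  · have hurt : u = rt μ E vk := by rw [hvw]; rfl
    subst hurt
    have h2 : (Gr (applyI μ m E c)).dist (lab μ E vk j) (rt μ E vk)
        = Nat.dist (j+1) 0 := dist_pv_same μ m E c vk hj (Nat.zero_le _)
    rw [h2, SimpleGraph.dist_self, Nat.dist_zero_right]
    omega
  · have h2 : (Gr (applyI μ m E c)).dist (lab μ E vk j) u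
        = (Gr E).dist (rt μ E vk) u + (j+1) + 0 :=
      dist_pv_diff μ m E c hT hvw (j := j + 1) (j' := 0) hj (Nat.zero_le _)
    omega

lemma dist_PP_same {vk : Idx μ E} {j j' : ℕ} (hj : j < Lf μ m E c vk)
    (hj' : j' < Lf μ m E c vk) :
    (Gr (applyI μ m E c)).dist (lab μ E vk j) (lab μ E vk j') = Nat.dist j j' := by
  have h2 : (Gr (applyI μ m E c)).dist (lab μ E vk j) (lab μ E vk j')
      = Nat.dist (j+1) (j'+1) := dist_pv_same μ m E c vk hj hj'
  rw [h2]
  simp [Nat.dist]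

lemma dist_PP_diff (hT : IsTreeEdges E) {vk wk : Idx μ E} (hne : vk ≠ wk) {j j' : ℕ}
    (hj : j < Lf μ m E c vk) (hj' : j' < Lf μ m E c wk) :
    (Gr (applyI μ m E c)).dist (lab μ E vk j) (lab μ E wk j')
      = (Gr E).dist (rt μ E vk) (rt μ E wk) + j + j' + 2 := by
  have h2 : (Gr (applyI μ m E c)).dist (lab μ E vk j) (lab μ E wk j')
      = (Gr E).dist (rt μ E vk) (rt μ E wk) + (j+1) + (j'+1) :=
    dist_pv_diff μ m E c hT hne hj hj'
  omega

lemma sum2_eq (hμ : 1 ≤ μ) (hT : IsTreeEdges E) (hmpos : ∀ i, 0 < m i) :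
    (∑ x ∈ verts (applyI μ m E c), ∑ y ∈ verts (applyI μ m E c),
      ((Gr (applyI μ m E c)).dist x y : ℝ))
    = (∑ u ∈ verts E, ∑ w ∈ verts E, ((Gr E).dist u w : ℝ))
      + 2 * ∑ vk : Idx μ E, ∑ j ∈ Finset.range (Lf μ m E c vk),
          ((∑ u ∈ verts E, ((Gr E).dist (rt μ E vk) u : ℝ)) + ((verts E).card : ℝ) * (j+1))
      + ∑ vk : Idx μ E, ∑ wk : Idx μ E,
          ∑ j ∈ Finset.range (Lf μ m E c vk), ∑ j' ∈ Finset.range (Lf μ m E c wk),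
            (if vk = wk then (Nat.dist j j' : ℝ)
             else ((Gr E).dist (rt μ E vk) (rt μ E wk) : ℝ) + j + j' + 2) := by
  set d : ℕ → ℕ → ℝ := fun x y => ((Gr (applyI μ m E c)).dist x y : ℝ) with hd
  rw [verts_applyI μ m E c hmpos]
  rw [Finset.sum_union (disj_V_P μ m E c)]
  have hsplit : ∀ x : ℕ, ∑ y ∈ verts E ∪ Pset μ m E c, d x y
      = ∑ y ∈ verts E, d x y + ∑ y ∈ Pset μ m E c, d x y :=
    fun x => Finset.sum_union (disj_V_P μ m E c)
  change ∑ x ∈ verts E, ∑ y ∈ verts E ∪ Pset μ m E c, d x y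
      + ∑ x ∈ Pset μ m E c, ∑ y ∈ verts E ∪ Pset μ m E c, d x y = _
  simp only [hsplit]
  rw [Finset.sum_add_distrib, Finset.sum_add_distrib]
  have hA : ∑ x ∈ verts E, ∑ y ∈ verts E, d x y
      = ∑ u ∈ verts E, ∑ w ∈ verts E, ((Gr E).dist u w : ℝ) := by
    refine Finset.sum_congr rfl fun u hu => Finset.sum_congr rfl fun w hw => ?_
    rw [hd]; beta_reduce; norm_cast
    exact dist_VV μ m E c hμ hT hu hw
  have hC : ∑ x ∈ Pset μ m E c, ∑ y ∈ verts E, d x y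
      = ∑ vk : Idx μ E, ∑ j ∈ Finset.range (Lf μ m E c vk),
          ((∑ u ∈ verts E, ((Gr E).dist (rt μ E vk) u : ℝ)) + ((verts E).card : ℝ) * (j+1)) := by
    rw [sum_Pset]
    refine Finset.sum_congr rfl fun vk _ => Finset.sum_congr rfl fun j hj => ?_
    rw [Finset.mem_range] at hj
    have : ∀ u ∈ verts E, d (lab μ E vk j) u
        = ((Gr E).dist (rt μ E vk) u : ℝ) + (j+1) := by
      intro u hu
      rw [hd]
      beta_reduce
      norm_cast
      exact dist_PV μ m E c hμ hT hj hu
    rw [Finset.sum_congr rfl this, Finset.sum_add_distrib, Finset.sum_const, nsmul_eq_mul]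
  have hB : ∑ x ∈ verts E, ∑ y ∈ Pset μ m E c, d x y
      = ∑ x ∈ Pset μ m E c, ∑ y ∈ verts E, d x y := by
    rw [Finset.sum_comm]
    refine Finset.sum_congr rfl fun x _ => Finset.sum_congr rfl fun y _ => ?_
    rw [hd]; beta_reduce; norm_cast
    exact SimpleGraph.dist_comm ..
  have hD : ∑ x ∈ Pset μ m E c, ∑ y ∈ Pset μ m E c, d x y
      = ∑ vk : Idx μ E, ∑ wk : Idx μ E,
          ∑ j ∈ Finset.range (Lf μ m E c vk), ∑ j' ∈ Finset.range (Lf μ m E c wk),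
            (if vk = wk then (Nat.dist j j' : ℝ)
             else ((Gr E).dist (rt μ E vk) (rt μ E wk) : ℝ) + j + j' + 2) := by
    rw [sum_Pset]
    refine Finset.sum_congr rfl fun vk _ => ?_
    have inner : ∀ j ∈ Finset.range (Lf μ m E c vk), ∑ y ∈ Pset μ m E c, d (lab μ E vk j) y
        = ∑ wk : Idx μ E, ∑ j' ∈ Finset.range (Lf μ m E c wk),
            (if vk = wk then (Nat.dist j j' : ℝ)
             else ((Gr E).dist (rt μ E vk) (rt μ E wk) : ℝ) + j + j' + 2) := by
      intro j hj
      rw [Finset.mem_range] at hj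
      rw [sum_Pset]
      refine Finset.sum_congr rfl fun wk _ => Finset.sum_congr rfl fun j' hj' => ?_
      rw [Finset.mem_range] at hj'
      by_cases hvw : vk = wk
      · subst hvw
        rw [if_pos rfl, hd]
        beta_reduce
        norm_cast
        exact dist_PP_same μ m E c hj hj'
      · rw [if_neg hvw, hd]
        beta_reduce
        push_cast
        norm_cast
        exact dist_PP_diff μ m E c hT hvw hj hj'
    rw [Finset.sum_congr rfl inner, Finset.sum_comm]
  rw [hA, hB, hC, hD]
  ring

end Graph


lemma sum_range_add_one (L : ℕ) : ∑ j ∈ Finset.range L, (j+1) = (L+1).choose 2 := by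
  induction L with
  | zero => simp
  | succ L ih =>
    rw [Finset.sum_range_succ, ih, Nat.choose_succ_succ (L+1) 1, Nat.choose_one_right]
    rw [show Nat.succ 1 = 2 from rfl]
    omega

lemma sum_natdist (L : ℕ) :
    ∑ j ∈ Finset.range L, ∑ j' ∈ Finset.range L, Nat.dist j j'
      = 2 * ∑ l ∈ Finset.Icc 2 L, l.choose 2 := by
  induction L with
  | zero => simp
  | succ L ih =>
    have hrefl : ∑ j ∈ Finset.range L, Nat.dist j L = (L+1).choose 2 := by
      have h1 : ∀ j ∈ Finset.range L, Nat.dist j L = L - j := by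
        intro j hj; rw [Finset.mem_range] at hj
        exact Nat.dist_eq_sub_of_le (le_of_lt hj)
      rw [Finset.sum_congr rfl h1, ← sum_range_add_one L]
      rw [← Finset.sum_range_reflect (fun j => j + 1) L]
      refine Finset.sum_congr rfl fun j hj => ?_
      rw [Finset.mem_range] at hj
      omega
    have hstep : ∑ j ∈ Finset.range (L+1), ∑ j' ∈ Finset.range (L+1), Nat.dist j j'
        = (∑ j ∈ Finset.range L, ∑ j' ∈ Finset.range L, Nat.dist j j') + 2 * (L+1).choose 2 := by
      rw [Finset.sum_range_succ]
      have hin : ∀ j ∈ Finset.range L, ∑ j' ∈ Finset.range (L+1), Nat.dist j j'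
          = (∑ j' ∈ Finset.range L, Nat.dist j j') + Nat.dist j L := by
        intro j _; rw [Finset.sum_range_succ]
      rw [Finset.sum_congr rfl hin, Finset.sum_add_distrib, hrefl, Finset.sum_range_succ]
      have : ∑ j' ∈ Finset.range L, Nat.dist L j' = (L+1).choose 2 := by
        rw [← hrefl]; exact Finset.sum_congr rfl fun j _ => Nat.dist_comm L j
      rw [this, Nat.dist_self]
      omega
    rw [hstep, ih]
    rcases Nat.eq_zero_or_pos L with rfl | hL
    · simp
    · rw [Finset.sum_Icc_succ_top (by omega : 2 ≤ L + 1)]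
      ring

section Exp
variable {A : Type*} [Fintype A] [DecidableEq A] {μ : ℕ}

lemma exp_prod (g : A × Fin μ → Fin μ → ℝ) :
    ∑ c : A → Fin μ → Fin μ, ∏ vk : A × Fin μ, g vk (c vk.1 vk.2)
      = ∏ vk : A × Fin μ, ∑ i, g vk i := by
  rw [Fintype.prod_prod_type (fun vk : A × Fin μ => ∑ i, g vk i)]
  rw [show (∏ v : A, ∏ k : Fin μ, ∑ i, g (v, k) i)
      = ∏ v : A, ∑ d : Fin μ → Fin μ, ∏ k, g (v, k) (d k) from
    Finset.prod_congr rfl fun v _ => Fintype.prod_sum (fun k i => g (v, k) i)]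
  rw [Fintype.prod_sum (fun v (d : Fin μ → Fin μ) => ∏ k, g (v, k) (d k))]
  refine Finset.sum_congr rfl fun c _ => ?_
  exact Fintype.prod_prod_type (fun vk : A × Fin μ => g vk (c vk.1 vk.2))

lemma prod_single_ne {ι : Type*} [Fintype ι] [DecidableEq ι] (a : ι) (w : ι → ℝ)
    (hw : ∀ i, i ≠ a → w i = 1) : ∏ i, w i = w a := by
  have h := Finset.prod_subset (Finset.subset_univ {a})
    (fun x _ hx => hw x (by simpa using hx))
  rw [← h, Finset.prod_singleton]

lemma prod_pair_ne {ι : Type*} [Fintype ι] [DecidableEq ι] (a b : ι) (hab : a ≠ b) (w : ι → ℝ)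
    (hw : ∀ i, i ≠ a → i ≠ b → w i = 1) : ∏ i, w i = w a * w b := by
  have h := Finset.prod_subset (Finset.subset_univ {a, b})
    (fun x _ hx => by
      simp only [Finset.mem_insert, Finset.mem_singleton] at hx
      push_neg at hx
      exact hw x hx.1 hx.2)
  rw [← h, Finset.prod_pair hab]

variable (p : Fin μ → ℝ) (hp1 : ∑ i, p i = 1)

lemma exp_const (hp1 : ∑ i, p i = 1) :
    ∑ c : A → Fin μ → Fin μ, (∏ v : A, ∏ k : Fin μ, p (c v k)) = 1 := by
  have h : ∀ c : A → Fin μ → Fin μ, (∏ v : A, ∏ k : Fin μ, p (c v k))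
      = ∏ vk : A × Fin μ, p (c vk.1 vk.2) :=
    fun c => (Fintype.prod_prod_type (fun vk : A × Fin μ => p (c vk.1 vk.2))).symm
  rw [Finset.sum_congr rfl fun c _ => h c, exp_prod (fun _ i => p i)]
  simp [hp1]

lemma exp_one (hp1 : ∑ i, p i = 1) (a : A × Fin μ) (f : Fin μ → ℝ) :
    ∑ c : A → Fin μ → Fin μ, (∏ v : A, ∏ k : Fin μ, p (c v k)) * f (c a.1 a.2)
      = ∑ i, p i * f i := by
  have h : ∀ c : A → Fin μ → Fin μ, (∏ v : A, ∏ k : Fin μ, p (c v k)) * f (c a.1 a.2)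
      = ∏ vk : A × Fin μ, (p (c vk.1 vk.2) * if vk = a then f (c vk.1 vk.2) else 1) := by
    intro c
    rw [Finset.prod_mul_distrib, ← Fintype.prod_prod_type (fun vk : A × Fin μ => p (c vk.1 vk.2))]
    congr 1
    rw [prod_single_ne a _ (fun i hi => if_neg hi), if_pos rfl]
  rw [Finset.sum_congr rfl fun c _ => h c,
    exp_prod (fun vk i => p i * if vk = a then f i else 1)]
  have h2 : ∀ vk : A × Fin μ, (∑ i, p i * if vk = a then f i else 1)
      = if vk = a then ∑ i, p i * f i else 1 := by
    intro vk
    by_cases hvk : vk = a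
    · simp [hvk]
    · simp [hvk, hp1]
  rw [Finset.prod_congr rfl fun vk _ => h2 vk,
    prod_single_ne a _ (fun i hi => if_neg hi), if_pos rfl]

lemma exp_two (hp1 : ∑ i, p i = 1) (a b : A × Fin μ) (hab : a ≠ b) (f g : Fin μ → ℝ) :
    ∑ c : A → Fin μ → Fin μ,
        (∏ v : A, ∏ k : Fin μ, p (c v k)) * f (c a.1 a.2) * g (c b.1 b.2)
      = (∑ i, p i * f i) * (∑ i, p i * g i) := by
  have h : ∀ c : A → Fin μ → Fin μ,
      (∏ v : A, ∏ k : Fin μ, p (c v k)) * f (c a.1 a.2) * g (c b.1 b.2)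
      = ∏ vk : A × Fin μ, (p (c vk.1 vk.2) *
          ((if vk = a then f (c vk.1 vk.2) else 1) * (if vk = b then g (c vk.1 vk.2) else 1))) := by
    intro c
    rw [Finset.prod_mul_distrib, Finset.prod_mul_distrib,
      ← Fintype.prod_prod_type (fun vk : A × Fin μ => p (c vk.1 vk.2))]
    rw [prod_single_ne a _ (fun i hi => if_neg hi), if_pos rfl,
      prod_single_ne b _ (fun i hi => if_neg hi), if_pos rfl]
    ring
  rw [Finset.sum_congr rfl fun c _ => h c,
    exp_prod (fun vk i => p i * ((if vk = a then f i else 1) * (if vk = b then g i else 1)))]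
  have h2 : ∀ vk : A × Fin μ, (∑ i, p i * ((if vk = a then f i else 1) * (if vk = b then g i else 1)))
      = if vk = a then ∑ i, p i * f i else if vk = b then ∑ i, p i * g i else 1 := by
    intro vk
    by_cases hva : vk = a
    · subst hva
      simp [hab]
    · by_cases hvb : vk = b
      · have hba : ¬ (b = a) := fun hh => hva (hvb.trans hh)
        simp [hva, hvb, hba]
      · simp [hva, hvb, hp1]
  rw [Finset.prod_congr rfl fun vk _ => h2 vk,
    prod_pair_ne a b hab _ (fun i hia hib => by rw [if_neg hia, if_neg hib]),
    if_pos rfl, if_neg (Ne.symm hab), if_pos rfl]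

end Exp

def Tmr (L : ℕ) : ℝ := (((L+1).choose 2 : ℕ) : ℝ)

def Rmr (L : ℕ) : ℝ := ∑ l ∈ Finset.Icc 2 L, ((l.choose 2 : ℕ) : ℝ)

lemma sum_Tcast (L : ℕ) : ∑ j ∈ Finset.range L, ((j:ℝ)+1) = Tmr L := by
  rw [Tmr, ← sum_range_add_one]
  push_cast
  rfl

lemma sum_natdist_cast (L : ℕ) :
    ∑ j ∈ Finset.range L, ∑ j' ∈ Finset.range L, ((Nat.dist j j' : ℕ) : ℝ) = 2 * Rmr L := by
  rw [Rmr]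
  have := sum_natdist L
  have h2 : (((∑ j ∈ Finset.range L, ∑ j' ∈ Finset.range L, Nat.dist j j') : ℕ) : ℝ)
      = ((2 * ∑ l ∈ Finset.Icc 2 L, l.choose 2 : ℕ) : ℝ) := by rw [this]
  push_cast at h2
  convert h2 using 2

lemma sum_block (r : ℝ) (a b : ℕ) :
    ∑ j ∈ Finset.range a, ∑ j' ∈ Finset.range b, (r + (j:ℝ) + (j':ℝ) + 2)
      = r * a * b + Tmr a * b + Tmr b * a := by
  have h2 : ∀ s : ℝ, ∀ n : ℕ, ∑ j ∈ Finset.range n, (s + ((j:ℝ)+1)) = n * s + Tmr n := by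
    intro s n
    rw [Finset.sum_add_distrib, Finset.sum_const, Finset.card_range, nsmul_eq_mul, sum_Tcast]
  have h1 : ∀ j : ℕ, ∑ j' ∈ Finset.range b, (r + (j:ℝ) + (j':ℝ) + 2)
      = (b:ℝ) * (r + ((j:ℝ)+1)) + Tmr b := by
    intro j
    have : ∀ j' ∈ Finset.range b, (r + (j:ℝ) + (j':ℝ) + 2)
        = ((r + ((j:ℝ)+1)) + ((j':ℝ)+1)) := by intros; ring
    rw [Finset.sum_congr rfl this, h2]
  rw [Finset.sum_congr rfl (fun j _ => h1 j), Finset.sum_add_distrib, Finset.sum_const,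
    Finset.card_range, nsmul_eq_mul, ← Finset.mul_sum, h2]
  ring

section Assemble
variable (μ : ℕ) (m : Fin μ → ℕ) (E : Finset (Sym2 ℕ))
  (c : {x // x ∈ verts E} → Fin μ → Fin μ)

noncomputable def Dv (vk : Idx μ E) : ℝ := ∑ u ∈ verts E, ((Gr E).dist (rt μ E vk) u : ℝ)

noncomputable def dpr (vk wk : Idx μ E) : ℝ := ((Gr E).dist (rt μ E vk) (rt μ E wk) : ℝ)

lemma wiener_applyI (hμ : 1 ≤ μ) (hT : IsTreeEdges E) (hmpos : ∀ i, 0 < m i) :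
    wienerE (applyI μ m E c)
      = ((∑ u ∈ verts E, ∑ w ∈ verts E, ((Gr E).dist u w : ℝ))
        + 2 * ∑ vk : Idx μ E, ((m (c vk.1 vk.2) : ℝ) * Dv μ E vk
            + ((verts E).card : ℝ) * Tmr (m (c vk.1 vk.2)))
        + ∑ vk : Idx μ E, (2 * Rmr (m (c vk.1 vk.2))
            + ∑ wk ∈ Finset.univ.erase vk,
              (dpr μ E vk wk * (m (c vk.1 vk.2) : ℝ) * (m (c wk.1 wk.2) : ℝ)
                + Tmr (m (c vk.1 vk.2)) * (m (c wk.1 wk.2) : ℝ)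
                + Tmr (m (c wk.1 wk.2)) * (m (c vk.1 vk.2) : ℝ)))) / 2 := by
  rw [wienerE, sum2_eq μ m E c hμ hT hmpos]
  have hB : ∀ vk : Idx μ E, ∑ j ∈ Finset.range (Lf μ m E c vk),
        ((∑ u ∈ verts E, ((Gr E).dist (rt μ E vk) u : ℝ)) + ((verts E).card : ℝ) * ((j:ℝ)+1))
      = (m (c vk.1 vk.2) : ℝ) * Dv μ E vk + ((verts E).card : ℝ) * Tmr (m (c vk.1 vk.2)) := by
    intro vk
    rw [Finset.sum_add_distrib, Finset.sum_const, Finset.card_range, nsmul_eq_mul,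
      ← Finset.mul_sum, sum_Tcast, Dv]
    rfl
  have hD : ∀ vk : Idx μ E, (∑ wk : Idx μ E,
        ∑ j ∈ Finset.range (Lf μ m E c vk), ∑ j' ∈ Finset.range (Lf μ m E c wk),
          (if vk = wk then ((Nat.dist j j' : ℕ) : ℝ)
           else ((Gr E).dist (rt μ E vk) (rt μ E wk) : ℝ) + (j:ℝ) + (j':ℝ) + 2))
      = 2 * Rmr (m (c vk.1 vk.2))
        + ∑ wk ∈ Finset.univ.erase vk,
            (dpr μ E vk wk * (m (c vk.1 vk.2) : ℝ) * (m (c wk.1 wk.2) : ℝ)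
              + Tmr (m (c vk.1 vk.2)) * (m (c wk.1 wk.2) : ℝ)
              + Tmr (m (c wk.1 wk.2)) * (m (c vk.1 vk.2) : ℝ)) := by
    intro vk
    rw [← Finset.add_sum_erase _ _ (Finset.mem_univ vk)]
    congr 1
    · refine Eq.trans (Finset.sum_congr rfl fun j _ => Finset.sum_congr rfl fun j' _ =>
        if_pos rfl) (sum_natdist_cast (m (c vk.1 vk.2)))
    · refine Finset.sum_congr rfl fun wk hwk => ?_
      have hne : vk ≠ wk := fun h => (Finset.mem_erase.mp hwk).1 h.symm
      refine Eq.trans (Finset.sum_congr rfl fun j _ => Finset.sum_congr rfl fun j' _ =>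
        if_neg hne) ?_
      rw [show (Lf μ m E c vk) = m (c vk.1 vk.2) from rfl,
        show (Lf μ m E c wk) = m (c wk.1 wk.2) from rfl]
      rw [sum_block (((Gr E).dist (rt μ E vk) (rt μ E wk) : ℝ)) (m (c vk.1 vk.2)) (m (c wk.1 wk.2))]
      rw [dpr]
  rw [Finset.sum_congr rfl (fun vk _ => hB vk), Finset.sum_congr rfl (fun vk _ => hD vk)]

end Assemble
end OpI

set_option maxHeartbeats 2000000 in
/-- Expected Wiener index of `T_I(1)`, obtained from a seed tree with `h` vertices
and Wiener index `W_T` by one application of Operation-I. -/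
theorem expected_wiener_opI_one (μ : ℕ) (hμ : 1 ≤ μ)
    (m : Fin μ → ℕ) (hmpos : ∀ i, 0 < m i) (hminj : Function.Injective m)
    (p : Fin μ → ℝ) (hp : ∀ i, 0 ≤ p i) (hp1 : ∑ i, p i = 1)
    (E₀ : Finset (Sym2 ℕ)) (hT : IsTreeEdges E₀)
    (h : ℕ) (hh : h = (verts E₀).card)
    (WT : ℝ) (hWT : WT = wienerE E₀)
    (S : ℝ) (hS : S = ∑ i, p i * (m i : ℝ)) :
    expI μ p m wienerE 1 E₀
      = WT * (μ * S + 1) ^ 2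
        + μ * (μ * S + 1) * (∑ i, p i * (((m i + 1).choose 2 : ℕ) : ℝ)) * (h : ℝ) ^ 2
        + (μ * (∑ i, p i * ∑ l ∈ Finset.Icc 2 (m i), ((l.choose 2 : ℕ) : ℝ))
            + (2 * S * ((μ.choose 2 : ℕ) : ℝ) - (μ : ℝ) ^ 2 * S)
              * (∑ i, p i * (((m i + 1).choose 2 : ℕ) : ℝ))) * (h : ℝ) := by
  classical
  subst hh hWT hS
  have hTree := hT
  -- abbreviations
  set A0 : ℝ := ∑ u ∈ verts E₀, ∑ w ∈ verts E₀,
      ((SimpleGraph.fromEdgeSet (↑E₀ : Set (Sym2 ℕ))).dist u w : ℝ) with hA0def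
  set Sv : ℝ := ∑ i, p i * (m i : ℝ) with hSdef
  set Qv : ℝ := ∑ i, p i * (((m i + 1).choose 2 : ℕ) : ℝ) with hQdef
  set Rv : ℝ := ∑ i, p i * ∑ l ∈ Finset.Icc 2 (m i), ((l.choose 2 : ℕ) : ℝ) with hRdef
  set hR : ℝ := (((verts E₀).card : ℕ) : ℝ) with hhRdef
  have hQT : Qv = ∑ i, p i * OpI.Tmr (m i) := rfl
  have hRT : Rv = ∑ i, p i * OpI.Rmr (m i) := rfl
  have hWA : wienerE E₀ = A0 / 2 := rfl
  -- unfold the expectation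
  have step0 : expI μ p m wienerE 1 E₀
      = ∑ c : {x // x ∈ verts E₀} → Fin μ → Fin μ,
          (∏ v : {x // x ∈ verts E₀}, ∏ k : Fin μ, p (c v k)) * wienerE (applyI μ m E₀ c) := rfl
  rw [step0]
  -- closed form for each c
  have step1 : ∀ c : {x // x ∈ verts E₀} → Fin μ → Fin μ,
      (∏ v : {x // x ∈ verts E₀}, ∏ k : Fin μ, p (c v k)) * wienerE (applyI μ m E₀ c)
      = ((∏ v : {x // x ∈ verts E₀}, ∏ k : Fin μ, p (c v k)) * A0
        + 2 * ((∏ v : {x // x ∈ verts E₀}, ∏ k : Fin μ, p (c v k)) *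
            ∑ vk : OpI.Idx μ E₀, ((m (c vk.1 vk.2) : ℝ) * OpI.Dv μ E₀ vk
              + hR * OpI.Tmr (m (c vk.1 vk.2))))
        + (∏ v : {x // x ∈ verts E₀}, ∏ k : Fin μ, p (c v k)) *
            ∑ vk : OpI.Idx μ E₀, (2 * OpI.Rmr (m (c vk.1 vk.2))
              + ∑ wk ∈ Finset.univ.erase vk,
                (OpI.dpr μ E₀ vk wk * (m (c vk.1 vk.2) : ℝ) * (m (c wk.1 wk.2) : ℝ)
                  + OpI.Tmr (m (c vk.1 vk.2)) * (m (c wk.1 wk.2) : ℝ)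
                  + OpI.Tmr (m (c wk.1 wk.2)) * (m (c vk.1 vk.2) : ℝ)))) / 2 := by
    intro c
    rw [OpI.wiener_applyI μ m E₀ c hμ hTree hmpos]
    rw [hhRdef]
    ring
  rw [Finset.sum_congr rfl (fun c _ => step1 c), ← Finset.sum_div, Finset.sum_add_distrib,
    Finset.sum_add_distrib]
  -- term 1
  have H1 : ∑ c : {x // x ∈ verts E₀} → Fin μ → Fin μ,
      (∏ v : {x // x ∈ verts E₀}, ∏ k : Fin μ, p (c v k)) * A0 = A0 := by
    rw [← Finset.sum_mul, OpI.exp_const p hp1, one_mul]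
  -- term 2
  have H2 : ∑ c : {x // x ∈ verts E₀} → Fin μ → Fin μ,
      2 * ((∏ v : {x // x ∈ verts E₀}, ∏ k : Fin μ, p (c v k)) *
        ∑ vk : OpI.Idx μ E₀, ((m (c vk.1 vk.2) : ℝ) * OpI.Dv μ E₀ vk
          + hR * OpI.Tmr (m (c vk.1 vk.2))))
      = 2 * ∑ vk : OpI.Idx μ E₀, (Sv * OpI.Dv μ E₀ vk + hR * Qv) := by
    rw [← Finset.mul_sum]
    congr 1
    have hswap : ∑ c : {x // x ∈ verts E₀} → Fin μ → Fin μ,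
        (∏ v : {x // x ∈ verts E₀}, ∏ k : Fin μ, p (c v k)) *
          ∑ vk : OpI.Idx μ E₀, ((m (c vk.1 vk.2) : ℝ) * OpI.Dv μ E₀ vk
            + hR * OpI.Tmr (m (c vk.1 vk.2)))
        = ∑ vk : OpI.Idx μ E₀, ∑ c : {x // x ∈ verts E₀} → Fin μ → Fin μ,
            (∏ v : {x // x ∈ verts E₀}, ∏ k : Fin μ, p (c v k)) *
              ((m (c vk.1 vk.2) : ℝ) * OpI.Dv μ E₀ vk + hR * OpI.Tmr (m (c vk.1 vk.2))) := by
      rw [Finset.sum_comm]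
      exact Finset.sum_congr rfl fun c _ => Finset.mul_sum _ _ _
    rw [hswap]
    refine Finset.sum_congr rfl fun vk _ => ?_
    rw [OpI.exp_one p hp1 vk (fun i => (m i : ℝ) * OpI.Dv μ E₀ vk + hR * OpI.Tmr (m i))]
    have : ∀ i : Fin μ, p i * ((m i : ℝ) * OpI.Dv μ E₀ vk + hR * OpI.Tmr (m i))
        = (p i * (m i : ℝ)) * OpI.Dv μ E₀ vk + hR * (p i * OpI.Tmr (m i)) := by
      intro i; ring
    rw [Finset.sum_congr rfl fun i _ => this i, Finset.sum_add_distrib, ← Finset.sum_mul,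
      ← Finset.mul_sum, ← hSdef, ← hQT]
  -- term 3
  have H3 : ∑ c : {x // x ∈ verts E₀} → Fin μ → Fin μ,
      (∏ v : {x // x ∈ verts E₀}, ∏ k : Fin μ, p (c v k)) *
        ∑ vk : OpI.Idx μ E₀, (2 * OpI.Rmr (m (c vk.1 vk.2))
          + ∑ wk ∈ Finset.univ.erase vk,
            (OpI.dpr μ E₀ vk wk * (m (c vk.1 vk.2) : ℝ) * (m (c wk.1 wk.2) : ℝ)
              + OpI.Tmr (m (c vk.1 vk.2)) * (m (c wk.1 wk.2) : ℝ)
              + OpI.Tmr (m (c wk.1 wk.2)) * (m (c vk.1 vk.2) : ℝ)))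
      = ∑ vk : OpI.Idx μ E₀, (2 * Rv
          + ∑ wk ∈ Finset.univ.erase vk,
              (OpI.dpr μ E₀ vk wk * (Sv * Sv) + (Qv * Sv + Sv * Qv))) := by
    rw [Finset.sum_congr rfl fun c (_ : c ∈ Finset.univ) => Finset.mul_sum _ _ _,
      Finset.sum_comm]
    refine Finset.sum_congr rfl fun vk _ => ?_
    have hsplit : ∀ c : {x // x ∈ verts E₀} → Fin μ → Fin μ,
        (∏ v : {x // x ∈ verts E₀}, ∏ k : Fin μ, p (c v k)) *
          (2 * OpI.Rmr (m (c vk.1 vk.2))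
            + ∑ wk ∈ Finset.univ.erase vk,
              (OpI.dpr μ E₀ vk wk * (m (c vk.1 vk.2) : ℝ) * (m (c wk.1 wk.2) : ℝ)
                + OpI.Tmr (m (c vk.1 vk.2)) * (m (c wk.1 wk.2) : ℝ)
                + OpI.Tmr (m (c wk.1 wk.2)) * (m (c vk.1 vk.2) : ℝ)))
        = (∏ v : {x // x ∈ verts E₀}, ∏ k : Fin μ, p (c v k)) * (2 * OpI.Rmr (m (c vk.1 vk.2)))
          + ∑ wk ∈ Finset.univ.erase vk,
              ((∏ v : {x // x ∈ verts E₀}, ∏ k : Fin μ, p (c v k)) *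
                (OpI.dpr μ E₀ vk wk * (m (c vk.1 vk.2) : ℝ) * (m (c wk.1 wk.2) : ℝ))
              + (∏ v : {x // x ∈ verts E₀}, ∏ k : Fin μ, p (c v k)) *
                (OpI.Tmr (m (c vk.1 vk.2)) * (m (c wk.1 wk.2) : ℝ))
              + (∏ v : {x // x ∈ verts E₀}, ∏ k : Fin μ, p (c v k)) *
                (OpI.Tmr (m (c wk.1 wk.2)) * (m (c vk.1 vk.2) : ℝ))) := by
      intro c
      rw [mul_add, Finset.mul_sum]
      congr 1
      refine Finset.sum_congr rfl fun wk _ => ?_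
      ring
    rw [Finset.sum_congr rfl fun c _ => hsplit c, Finset.sum_add_distrib]
    congr 1
    · rw [OpI.exp_one p hp1 vk (fun i => 2 * OpI.Rmr (m i)), hRT]
      rw [Finset.mul_sum]
      refine Finset.sum_congr rfl fun i _ => ?_
      ring
    · rw [Finset.sum_comm]
      refine Finset.sum_congr rfl fun wk hwk => ?_
      have hne : vk ≠ wk := fun hh => (Finset.mem_erase.mp hwk).1 hh.symm
      rw [Finset.sum_add_distrib, Finset.sum_add_distrib]
      have e1 : ∑ c : {x // x ∈ verts E₀} → Fin μ → Fin μ,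
          (∏ v : {x // x ∈ verts E₀}, ∏ k : Fin μ, p (c v k)) *
            (OpI.dpr μ E₀ vk wk * (m (c vk.1 vk.2) : ℝ) * (m (c wk.1 wk.2) : ℝ))
          = OpI.dpr μ E₀ vk wk * (Sv * Sv) := by
        have : ∀ c : {x // x ∈ verts E₀} → Fin μ → Fin μ,
            (∏ v : {x // x ∈ verts E₀}, ∏ k : Fin μ, p (c v k)) *
              (OpI.dpr μ E₀ vk wk * (m (c vk.1 vk.2) : ℝ) * (m (c wk.1 wk.2) : ℝ))
            = OpI.dpr μ E₀ vk wk *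
              ((∏ v : {x // x ∈ verts E₀}, ∏ k : Fin μ, p (c v k)) *
                (m (c vk.1 vk.2) : ℝ) * (m (c wk.1 wk.2) : ℝ)) := by intro c; ring
        rw [Finset.sum_congr rfl fun c _ => this c, ← Finset.mul_sum]
        congr 1
        rw [OpI.exp_two p hp1 vk wk hne (fun i => (m i : ℝ)) (fun i => (m i : ℝ)), ← hSdef]
      have e2 : ∑ c : {x // x ∈ verts E₀} → Fin μ → Fin μ,
          (∏ v : {x // x ∈ verts E₀}, ∏ k : Fin μ, p (c v k)) *
            (OpI.Tmr (m (c vk.1 vk.2)) * (m (c wk.1 wk.2) : ℝ))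
          = Qv * Sv := by
        have : ∀ c : {x // x ∈ verts E₀} → Fin μ → Fin μ,
            (∏ v : {x // x ∈ verts E₀}, ∏ k : Fin μ, p (c v k)) *
              (OpI.Tmr (m (c vk.1 vk.2)) * (m (c wk.1 wk.2) : ℝ))
            = (∏ v : {x // x ∈ verts E₀}, ∏ k : Fin μ, p (c v k)) *
                OpI.Tmr (m (c vk.1 vk.2)) * (m (c wk.1 wk.2) : ℝ) := by intro c; ring
        rw [Finset.sum_congr rfl fun c _ => this c,
          OpI.exp_two p hp1 vk wk hne (fun i => OpI.Tmr (m i)) (fun i => (m i : ℝ)),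
          ← hSdef, ← hQT]
      have e3 : ∑ c : {x // x ∈ verts E₀} → Fin μ → Fin μ,
          (∏ v : {x // x ∈ verts E₀}, ∏ k : Fin μ, p (c v k)) *
            (OpI.Tmr (m (c wk.1 wk.2)) * (m (c vk.1 vk.2) : ℝ))
          = Sv * Qv := by
        have : ∀ c : {x // x ∈ verts E₀} → Fin μ → Fin μ,
            (∏ v : {x // x ∈ verts E₀}, ∏ k : Fin μ, p (c v k)) *
              (OpI.Tmr (m (c wk.1 wk.2)) * (m (c vk.1 vk.2) : ℝ))
            = (∏ v : {x // x ∈ verts E₀}, ∏ k : Fin μ, p (c v k)) *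
                (m (c vk.1 vk.2) : ℝ) * OpI.Tmr (m (c wk.1 wk.2)) := by intro c; ring
        rw [Finset.sum_congr rfl fun c _ => this c,
          OpI.exp_two p hp1 vk wk hne (fun i => (m i : ℝ)) (fun i => OpI.Tmr (m i)),
          ← hSdef, ← hQT]
      rw [e1, e2, e3]
      ring
  rw [H1, H2, H3]
  -- counting sums
  have hsumDv : ∑ vk : OpI.Idx μ E₀, OpI.Dv μ E₀ vk = (μ : ℝ) * A0 := by
    rw [Fintype.sum_prod_type]
    have h1 : ∀ v : {x // x ∈ verts E₀}, ∑ k : Fin μ, OpI.Dv μ E₀ (v, k)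
        = (μ : ℝ) * ∑ u ∈ verts E₀,
            ((SimpleGraph.fromEdgeSet (↑E₀ : Set (Sym2 ℕ))).dist (↑v) u : ℝ) := by
      intro v
      have hk : ∀ k : Fin μ, OpI.Dv μ E₀ (v, k)
          = ∑ u ∈ verts E₀, ((SimpleGraph.fromEdgeSet (↑E₀ : Set (Sym2 ℕ))).dist (↑v) u : ℝ) :=
        fun k => rfl
      simp only [hk]
      rw [Finset.sum_const, Finset.card_univ, Fintype.card_fin, nsmul_eq_mul]
    rw [Finset.sum_congr rfl fun v _ => h1 v, ← Finset.mul_sum]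
    congr 1
    exact Finset.sum_coe_sort (verts E₀)
      (fun v => ∑ u ∈ verts E₀, ((SimpleGraph.fromEdgeSet (↑E₀ : Set (Sym2 ℕ))).dist v u : ℝ))
  have hfullrow : ∀ vk : OpI.Idx μ E₀, ∑ wk : OpI.Idx μ E₀, OpI.dpr μ E₀ vk wk
      = (μ : ℝ) * OpI.Dv μ E₀ vk := by
    intro vk
    rw [Fintype.sum_prod_type]
    have h1 : ∀ w : {x // x ∈ verts E₀}, ∑ k : Fin μ, OpI.dpr μ E₀ vk (w, k)
        = (μ : ℝ) * ((SimpleGraph.fromEdgeSet (↑E₀ : Set (Sym2 ℕ))).dist (OpI.rt μ E₀ vk) (↑w) : ℝ) := by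
      intro w
      have hk : ∀ k : Fin μ, OpI.dpr μ E₀ vk (w, k)
          = ((SimpleGraph.fromEdgeSet (↑E₀ : Set (Sym2 ℕ))).dist (OpI.rt μ E₀ vk) (↑w) : ℝ) :=
        fun k => rfl
      simp only [hk]
      rw [Finset.sum_const, Finset.card_univ, Fintype.card_fin, nsmul_eq_mul]
    rw [Finset.sum_congr rfl fun w _ => h1 w, ← Finset.mul_sum]
    congr 1
    exact Finset.sum_coe_sort (verts E₀)
      (fun w => ((SimpleGraph.fromEdgeSet (↑E₀ : Set (Sym2 ℕ))).dist (OpI.rt μ E₀ vk) w : ℝ))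
  have hdd : ∑ vk : OpI.Idx μ E₀, ∑ wk ∈ Finset.univ.erase vk, OpI.dpr μ E₀ vk wk
      = (μ : ℝ) * ((μ : ℝ) * A0) := by
    have hrow : ∀ vk : OpI.Idx μ E₀, ∑ wk ∈ Finset.univ.erase vk, OpI.dpr μ E₀ vk wk
        = (∑ wk : OpI.Idx μ E₀, OpI.dpr μ E₀ vk wk) - OpI.dpr μ E₀ vk vk :=
      fun vk => eq_sub_of_add_eq' (Finset.add_sum_erase _ _ (Finset.mem_univ vk))
    have hself : ∀ vk : OpI.Idx μ E₀, OpI.dpr μ E₀ vk vk = 0 := by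
      intro vk
      rw [OpI.dpr, SimpleGraph.dist_self]
      norm_num
    rw [Finset.sum_congr rfl fun vk _ => by rw [hrow vk, hfullrow vk, hself vk, sub_zero]]
    rw [← Finset.mul_sum, hsumDv]
  have hcard : (Finset.univ : Finset (OpI.Idx μ E₀)).card = (verts E₀).card * μ := by
    rw [Finset.card_univ, Fintype.card_prod, Fintype.card_coe, Fintype.card_fin]
  have hvpos : 0 < (verts E₀).card := by
    obtain ⟨e, he⟩ := hTree.1
    refine Finset.card_pos.mpr ⟨e.out.1, ?_⟩
    rw [OpI.mem_verts]
    exact ⟨e, he, Sym2.out_fst_mem e⟩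
  have hNpos : 1 ≤ (verts E₀).card * μ := by
    have := Nat.mul_le_mul hvpos hμ
    omega
  -- evaluate the two Idx-indexed sums
  have K2 : ∑ vk : OpI.Idx μ E₀, (Sv * OpI.Dv μ E₀ vk + hR * Qv)
      = Sv * ((μ : ℝ) * A0) + ((verts E₀).card * μ : ℕ) * (hR * Qv) := by
    rw [Finset.sum_add_distrib, Finset.sum_const, hcard, nsmul_eq_mul, ← Finset.mul_sum, hsumDv]
  have K3 : ∑ vk : OpI.Idx μ E₀, (2 * Rv
        + ∑ wk ∈ Finset.univ.erase vk,
            (OpI.dpr μ E₀ vk wk * (Sv * Sv) + (Qv * Sv + Sv * Qv)))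
      = ((verts E₀).card * μ : ℕ) * (2 * Rv)
        + ((μ : ℝ) * ((μ : ℝ) * A0) * (Sv * Sv)
          + ((verts E₀).card * μ : ℕ) * ((((verts E₀).card * μ : ℕ) : ℝ) - 1)
              * (Qv * Sv + Sv * Qv)) := by
    rw [Finset.sum_add_distrib, Finset.sum_const, hcard, nsmul_eq_mul]
    congr 1
    have hrow2 : ∀ vk : OpI.Idx μ E₀, ∑ wk ∈ Finset.univ.erase vk,
          (OpI.dpr μ E₀ vk wk * (Sv * Sv) + (Qv * Sv + Sv * Qv))
        = (∑ wk ∈ Finset.univ.erase vk, OpI.dpr μ E₀ vk wk) * (Sv * Sv)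
          + ((((verts E₀).card * μ : ℕ) : ℝ) - 1) * (Qv * Sv + Sv * Qv) := by
      intro vk
      rw [Finset.sum_add_distrib, ← Finset.sum_mul, Finset.sum_const,
        Finset.card_erase_of_mem (Finset.mem_univ vk), hcard, nsmul_eq_mul]
      congr 2
      push_cast [hNpos]
      ring
    rw [Finset.sum_congr rfl fun vk _ => hrow2 vk, Finset.sum_add_distrib, Finset.sum_const,
      hcard, nsmul_eq_mul, ← Finset.sum_mul, hdd]
    ring
  rw [K2, K3, hWA, Nat.cast_choose_two]
  push_cast
  ring
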